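/- Let p be an odd prime and a ∈ ℤ_p^* of odd order j. Then the subgroup of ℤ_p^* generated by −1 and a is cyclic of order 2j with generator −a, and the number of d-element subsets of ℤ_p \ {0} invariant under both multiplication by a and by −1 is binomial((p−1)/(2j), d/(2j)) if 2j divides d, and 0 otherwise. -/

import Mathlib

/-- Let `p` be an odd prime and `a ∈ ℤ_p^*` of odd order `j`.  Then the
subgroup generated by `-1` and `a` is cyclic with generator `-a` of order
`2j`, and the number of `d`-element subsets of `ℤ_p \ {0}` invariant under
multiplication by both `a` and `-1` is `C((p-1)/(2j), d/(2j))` if `2j ∣ d`,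
and `0` otherwise. -/
theorem odd_order_real_invariant_subsets
    (p d j : ℕ) (hp : p.Prime) (hodd : p ≠ 2)
    (a : (ZMod p)ˣ) (hj : orderOf a = j) (hjodd : Odd j) :
    orderOf (-a) = 2 * j ∧
    Subgroup.closure {(-1 : (ZMod p)ˣ), a} = Subgroup.zpowers (-a) ∧
    Nat.card {A : Finset (ZMod p) //
        A.card = d ∧ (0 : ZMod p) ∉ A ∧
        A.image (fun x => (a : ZMod p) * x) = A ∧
        A.image (fun x => -x) = A}
      = if 2 * j ∣ d then ((p - 1) / (2 * j)).choose (d / (2 * j)) else 0 := by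
  classical
  haveI : Fact p.Prime := ⟨hp⟩
  have hj0 : j ≠ 0 := by rintro rfl; simpa using hjodd
  have h2j0 : 2 * j ≠ 0 := by positivity
  -- order of -1 is 2
  have hord1 : orderOf (-1 : (ZMod p)ˣ) = 2 := by
    have : ((-1 : (ZMod p)ˣ) : ZMod p) = (-1 : ZMod p) := Units.coe_neg_one
    rw [← orderOf_units, this, orderOf_neg_one, if_neg]
    rw [ringChar.eq (ZMod p) p]
    exact hodd
  -- part 1
  have h2j : orderOf (-a) = 2 * j := by
    rw [neg_eq_neg_one_mul,
      (Commute.all (-1 : (ZMod p)ˣ) a).orderOf_mul_eq_mul_orderOf_of_coprime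
        (by rw [hord1, hj]; exact Nat.coprime_two_left.mpr hjodd),
      hord1, hj]
  have hapow : (-a) ^ j = -1 := by
    rw [hjodd.neg_pow, show a ^ j = 1 from hj ▸ pow_orderOf_eq_one a]
  have hneg1H : (-1 : (ZMod p)ˣ) ∈ Subgroup.zpowers (-a) :=
    ⟨(j : ℤ), by show (-a) ^ (j : ℤ) = -1; rw [zpow_natCast, hapow]⟩
  have haH : a ∈ Subgroup.zpowers (-a) := by
    have h : (-1 : (ZMod p)ˣ) * (-a) = a := by simp
    have h2 := mul_mem hneg1H (Subgroup.mem_zpowers (-a))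
    rwa [h] at h2
  -- part 2
  have hclosure : Subgroup.closure {(-1 : (ZMod p)ˣ), a} = Subgroup.zpowers (-a) := by
    apply le_antisymm
    · rw [Subgroup.closure_le]
      rintro x hx
      simp only [Set.mem_insert_iff, Set.mem_singleton_iff] at hx
      rcases hx with rfl | rfl
      exacts [hneg1H, haH]
    · rw [Subgroup.zpowers_le]
      exact neg_one_mul a ▸ mul_mem
        (Subgroup.subset_closure (Set.mem_insert _ _))
        (Subgroup.subset_closure (Set.mem_insert_of_mem _ rfl))
  refine ⟨h2j, hclosure, ?_⟩
  -- part 3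
  set H : Subgroup (ZMod p)ˣ := Subgroup.zpowers (-a) with hH
  set Q := (ZMod p)ˣ ⧸ H with hQ
  have hcardH : Nat.card H = 2 * j := by rw [hH, Nat.card_zpowers, h2j]
  -- fiber cardinality
  have fiber : ∀ q : Q, (Finset.univ.filter
      (fun x : (ZMod p)ˣ => (QuotientGroup.mk x : Q) = q)).card = 2 * j := by
    intro q
    obtain ⟨y, rfl⟩ := Quotient.exists_rep q
    have e : {x : (ZMod p)ˣ // (QuotientGroup.mk x : Q) = QuotientGroup.mk y} ≃ H :=
      { toFun := fun x => ⟨y⁻¹ * x.1, by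
          have hh := QuotientGroup.eq.mp x.2
          simpa [mul_inv_rev] using inv_mem hh⟩
        invFun := fun h => ⟨y * h.1, by
          rw [QuotientGroup.eq]
          simpa [mul_inv_rev, mul_assoc] using inv_mem h.2⟩
        left_inv := fun x => by ext; simp
        right_inv := fun h => by ext; simp }
    rw [← Fintype.card_subtype, Fintype.card_congr e, ← Nat.card_eq_fintype_card, hcardH]
  -- the lifting map
  set Φ : Finset Q → Finset (ZMod p) := fun B =>
    (Finset.univ.filter (fun x : (ZMod p)ˣ => (QuotientGroup.mk x : Q) ∈ B)).image
      (fun x : (ZMod p)ˣ => (x : ZMod p)) with hΦ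
  have hmem : ∀ (B : Finset Q) (z : ZMod p),
      z ∈ Φ B ↔ ∃ g : (ZMod p)ˣ, (QuotientGroup.mk g : Q) ∈ B ∧ (g : ZMod p) = z := by
    intro B z
    simp [hΦ, Finset.mem_image, Finset.mem_filter]
  have hΦcard : ∀ B : Finset Q, (Φ B).card = B.card * (2 * j) := by
    intro B
    rw [hΦ]
    rw [Finset.card_image_of_injective _ Units.val_injective]
    have hsplit : (Finset.univ.filter (fun x : (ZMod p)ˣ => (QuotientGroup.mk x : Q) ∈ B))
        = B.biUnion (fun q => Finset.univ.filter
            (fun x : (ZMod p)ˣ => (QuotientGroup.mk x : Q) = q)) := by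
      ext x
      simp
    rw [hsplit, Finset.card_biUnion, Finset.sum_congr rfl (fun q _ => fiber q),
      Finset.sum_const, smul_eq_mul]
    intro q1 _ q2 _ hne
    simp only [Finset.disjoint_left, Finset.mem_filter]
    rintro x ⟨_, rfl⟩ ⟨_, rfl⟩
    exact hne rfl
  have hΦ0 : ∀ B : Finset Q, (0 : ZMod p) ∉ Φ B := by
    intro B h
    rcases (hmem B 0).1 h with ⟨g, _, hg⟩
    exact g.ne_zero hg
  -- coset equality helper
  have hmk : ∀ (g x : (ZMod p)ˣ), g ∈ H →
      (QuotientGroup.mk (g * x) : Q) = QuotientGroup.mk x := by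
    intro g x hg
    rw [QuotientGroup.eq, mul_inv_rev, mul_comm x⁻¹ g⁻¹, mul_assoc, inv_mul_cancel, mul_one]
    exact inv_mem hg
  -- invariance of Φ B under multiplication by elements of H
  have hmul : ∀ (g : (ZMod p)ˣ), g ∈ H → ∀ B : Finset Q,
      (Φ B).image (fun z => (g : ZMod p) * z) = Φ B := by
    intro g hg B
    apply Finset.ext
    intro z
    simp only [Finset.mem_image]
    constructor
    · rintro ⟨w, hw, rfl⟩
      rcases (hmem B w).1 hw with ⟨x, hxB, rfl⟩
      exact (hmem B _).2 ⟨g * x, (hmk g x hg).symm ▸ hxB, Units.val_mul g x⟩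
    · intro hz
      rcases (hmem B z).1 hz with ⟨x, hxB, rfl⟩
      refine ⟨((g⁻¹ * x : (ZMod p)ˣ) : ZMod p),
        (hmem B _).2 ⟨g⁻¹ * x, (hmk g⁻¹ x (inv_mem hg)).symm ▸ hxB, rfl⟩, ?_⟩
      rw [← Units.val_mul, mul_inv_cancel_left]
  have hmula : ∀ B : Finset Q, (Φ B).image (fun z => (a : ZMod p) * z) = Φ B :=
    fun B => hmul a haH B
  have hmuln : ∀ B : Finset Q, (Φ B).image (fun z => -z) = Φ B := by
    intro B
    have := hmul (-1) hneg1H B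
    simpa only [Units.val_neg, Units.val_one, neg_one_mul] using this
  -- key: recover B from Φ B
  have key : ∀ (B : Finset Q) (y : (ZMod p)ˣ),
      (QuotientGroup.mk y : Q) ∈ B ↔ (y : ZMod p) ∈ Φ B := by
    intro B y
    constructor
    · intro h; exact (hmem B _).2 ⟨y, h, rfl⟩
    · intro h
      rcases (hmem B _).1 h with ⟨g, hg, hgy⟩
      rwa [Units.ext hgy] at hg
  have hΦinj : Function.Injective Φ := by
    intro B1 B2 h
    ext q
    obtain ⟨y, rfl⟩ := Quotient.exists_rep q
    rw [show (Quotient.mk _ y : Q) = QuotientGroup.mk y from rfl, key B1 y, key B2 y, h]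
  -- the bijection with subsets of the quotient
  set S := {A : Finset (ZMod p) //
      A.card = d ∧ (0 : ZMod p) ∉ A ∧
      A.image (fun x => (a : ZMod p) * x) = A ∧
      A.image (fun x => -x) = A} with hS
  set T := {B : Finset Q // B.card * (2 * j) = d} with hT
  have hf : ∀ B : T, (Φ B.1).card = d := fun B => by rw [hΦcard]; exact B.2
  let f : T → S := fun B => ⟨Φ B.1, hf B, hΦ0 B.1, hmula B.1, hmuln B.1⟩
  have hfinj : Function.Injective f := by
    intro B1 B2 h
    exact Subtype.ext (hΦinj (congrArg Subtype.val h))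
  have hfsurj : Function.Surjective f := by
    rintro ⟨A, hcard, h0, hAa, hAn⟩
    -- closure properties of A
    have haF : ∀ x ∈ A, (a : ZMod p) * x ∈ A := fun x hx =>
      hAa ▸ Finset.mem_image_of_mem _ hx
    have hnF : ∀ x ∈ A, -x ∈ A := fun x hx =>
      hAn ▸ Finset.mem_image_of_mem _ hx
    have haB : ∀ x ∈ A, ((a⁻¹ : (ZMod p)ˣ) : ZMod p) * x ∈ A := by
      intro x hx
      rw [← hAa] at hx
      rcases Finset.mem_image.1 hx with ⟨y, hy, rfl⟩
      have e : ((a⁻¹ : (ZMod p)ˣ) : ZMod p) * ((a : ZMod p) * y) = y := by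
        rw [← mul_assoc, ← Units.val_mul, inv_mul_cancel, Units.val_one, one_mul]
      rw [e]; exact hy
    have hu1 : ∀ x ∈ A, ((-a : (ZMod p)ˣ) : ZMod p) * x ∈ A := by
      intro x hx
      rw [Units.val_neg, neg_mul]
      exact hnF _ (haF _ hx)
    have hu2 : ∀ x ∈ A, (((-a)⁻¹ : (ZMod p)ˣ) : ZMod p) * x ∈ A := by
      intro x hx
      rw [inv_neg, Units.val_neg, neg_mul]
      exact hnF _ (haB _ hx)
    have hzpow : ∀ n : ℤ, ∀ x ∈ A, (((-a) ^ n : (ZMod p)ˣ) : ZMod p) * x ∈ A := by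
      intro n
      induction n using Int.induction_on with
      | zero => intro x hx; simpa using hx
      | succ n ih =>
          intro x hx
          have : ((-a : (ZMod p)ˣ) ^ ((n : ℤ) + 1)) = (-a) ^ (n : ℤ) * (-a) := zpow_add_one _ _
          rw [this, Units.val_mul, mul_assoc]
          exact ih _ (hu1 x hx)
      | pred n ih =>
          intro x hx
          have : ((-a : (ZMod p)ˣ) ^ (-(n : ℤ) - 1)) = (-a) ^ (-(n : ℤ)) * (-a)⁻¹ :=
            zpow_sub_one _ _
          rw [this, Units.val_mul, mul_assoc]
          exact ih _ (hu2 x hx)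
    have hHcl : ∀ g ∈ H, ∀ x ∈ A, (g : ZMod p) * x ∈ A := by
      rintro g ⟨n, rfl⟩ x hx
      exact hzpow n x hx
    -- the subset of the quotient
    set B : Finset Q := Finset.univ.filter
      (fun q : Q => ∃ g : (ZMod p)ˣ, (QuotientGroup.mk g : Q) = q ∧ (g : ZMod p) ∈ A) with hB
    have hΦB : Φ B = A := by
      ext z
      rw [hmem]
      constructor
      · rintro ⟨g, hgB, rfl⟩
        simp only [hB, Finset.mem_filter, Finset.mem_univ, true_and] at hgB
        rcases hgB with ⟨g', hg'q, hg'A⟩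
        have hh : g'⁻¹ * g ∈ H := QuotientGroup.eq.mp hg'q
        have hmem' : ((g'⁻¹ * g : (ZMod p)ˣ) : ZMod p) * (g' : ZMod p) ∈ A :=
          hHcl _ hh _ hg'A
        have e : ((g'⁻¹ * g : (ZMod p)ˣ) : ZMod p) * (g' : ZMod p) = (g : ZMod p) := by
          rw [← Units.val_mul, mul_comm, mul_inv_cancel_left]
        rwa [e] at hmem'
      · intro hz
        have hz0 : z ≠ 0 := fun h => h0 (h ▸ hz)
        refine ⟨Units.mk0 z hz0, ?_, rfl⟩
        simp only [hB, Finset.mem_filter, Finset.mem_univ, true_and]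
        exact ⟨Units.mk0 z hz0, rfl, hz⟩
    refine ⟨⟨B, ?_⟩, ?_⟩
    · rw [← hcard, ← hΦB]
      exact (hΦcard B).symm
    · apply Subtype.ext
      exact hΦB
  have hST : Nat.card S = Nat.card T :=
    (Nat.card_congr (Equiv.ofBijective f ⟨hfinj, hfsurj⟩)).symm
  -- cardinality of the quotient
  have hQcard : Fintype.card Q = (p - 1) / (2 * j) := by
    have h1 : H.index * (2 * j) = p - 1 := by
      rw [← hcardH, Subgroup.index_mul_card, Nat.card_eq_fintype_card, ZMod.card_units]
    have h2 : H.index = (p - 1) / (2 * j) := by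
      rw [← h1, Nat.mul_div_cancel _ (Nat.pos_of_ne_zero h2j0)]
    rw [← Nat.card_eq_fintype_card]
    exact h2 ▸ rfl
  rw [hST]
  by_cases hdvd : 2 * j ∣ d
  · rw [if_pos hdvd]
    have hiff : ∀ B : Finset Q, B.card * (2 * j) = d ↔ B.card = d / (2 * j) := by
      intro B
      constructor
      · rintro rfl
        rw [Nat.mul_div_cancel _ (Nat.pos_of_ne_zero h2j0)]
      · intro h
        rw [h, Nat.div_mul_cancel hdvd]
    rw [hT, Nat.card_congr (Equiv.subtypeEquivRight hiff), Nat.card_eq_fintype_card,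
      Fintype.card_finset_len, hQcard]
  · rw [if_neg hdvd]
    have : IsEmpty T := ⟨fun B => hdvd ⟨B.1.card, by rw [mul_comm]; exact B.2.symm⟩⟩
    exact Nat.card_of_isEmpty
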